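/- Let G be a temporal graph with n ≥ 2 vertices and connected underlying graph, and let F be the weight of a minimum-weight spanning tree of the underlying graph where each edge e is weighted by its frequency f_e. If the lifetime T is at least 2F, then from any starting vertex there exists a temporal walk exploring G of length at most 2F. -/

import Mathlib

/-- A temporal graph on vertex type `V`: timesteps `1, …, T`, with `active t e`
meaning the undirected edge `e` is active at timestep `t`. -/
structure TemporalGraph (V : Type) where
  T : ℕ
  active : ℕ → Sym2 V → Prop

namespace TemporalGraph

variable {V : Type}

/-- Edge `e` has frequency at most `f`: it is active at least once in every
window of `f` consecutive timesteps within `[1, T]`. -/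
def FreqLE (G : TemporalGraph V) (e : Sym2 V) (f : ℕ) : Prop :=
  0 < f ∧ ∀ t, 1 ≤ t → t + f ≤ G.T + 1 → ∃ s ∈ Finset.Ico t (t + f), G.active s e

/-- The frequency of an edge: the least `f` such that `e` is active at least
once in every `f` consecutive timesteps. -/
noncomputable def freq (G : TemporalGraph V) (e : Sym2 V) : ℕ :=
  sInf {f | G.FreqLE e f}

/-- Edge `e` is `r`-regular. -/
def Regular (G : TemporalGraph V) (e : Sym2 V) (r : ℕ) : Prop :=
  0 < r ∧ ∀ t, r + 1 ≤ t → t + r ≤ G.T →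
    ((G.active (t - r) e ↔ G.active t e) ∧ (G.active t e ↔ G.active (t + r) e))

/-- The underlying (static) graph of a temporal graph. -/
def underlying (G : TemporalGraph V) : SimpleGraph V where
  Adj u v := u ≠ v ∧ ∃ t ∈ Finset.Icc 1 G.T, G.active t s(u, v)
  symm := ⟨by
    intro u v h
    refine ⟨h.1.symm, ?_⟩
    rw [Sym2.eq_swap]
    exact h.2⟩
  loopless := ⟨fun v h => h.1 rfl⟩

/-- A temporal walk starting at `start`, given by vertices `vs 0, …, vs m` and
strictly increasing timesteps `ts 0 < … < ts (m-1)`, each step using an edge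
active at its timestep. -/
structure TWalk (G : TemporalGraph V) (start : V) where
  m : ℕ
  vs : Fin (m + 1) → V
  ts : Fin m → ℕ
  start_eq : vs 0 = start
  mono : StrictMono ts
  time_ge : ∀ i, 1 ≤ ts i
  time_le : ∀ i, ts i ≤ G.T
  steps : ∀ i : Fin m, G.active (ts i) s(vs i.castSucc, vs i.succ)

/-- A temporal walk explores the graph if every vertex is visited. -/
def TWalk.Explores {G : TemporalGraph V} {start : V} (w : G.TWalk start) : Prop :=
  Function.Surjective w.vs

/-- The length of a temporal walk: its final timestep. -/
def TWalk.length {G : TemporalGraph V} {start : V} (w : G.TWalk start) : ℕ :=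
  Finset.univ.sup w.ts

end TemporalGraph


open SimpleGraph

section TourAux
variable {V : Type} [Fintype V] [DecidableEq V]

lemma reach_split {A : SimpleGraph V} (v w : V) :
    ∀ {x u : V}, A.Walk x u →
      ((A.deleteEdges {s(v,w)}).Reachable v x ∨ (A.deleteEdges {s(v,w)}).Reachable w x) →
      ((A.deleteEdges {s(v,w)}).Reachable v u ∨ (A.deleteEdges {s(v,w)}).Reachable w u) := by
  intro x u p
  induction p with
  | nil => exact id
  | @cons a b c h q ih =>
    intro hx
    apply ih
    by_cases he : s(a, b) = s(v, w)
    · rw [Sym2.eq_iff] at he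
      rcases he with ⟨rfl, rfl⟩ | ⟨rfl, rfl⟩
      · exact Or.inr (Reachable.refl _)
      · exact Or.inl (Reachable.refl _)
    · have h' : (A.deleteEdges {s(v,w)}).Adj a b :=
        SimpleGraph.deleteEdges_adj.mpr ⟨h, by simpa using he⟩
      rcases hx with hr | hr
      · exact Or.inl (hr.trans h'.reachable)
      · exact Or.inr (hr.trans h'.reachable)

lemma tour_aux :
    ∀ (n : ℕ) (A : SimpleGraph V), A.IsAcyclic → A.edgeSet.ncard ≤ n → ∀ v : V,
      ∃ p : A.Walk v v, (∀ u, A.Reachable v u → u ∈ p.support) ∧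
        ∀ e, p.edges.count e ≤ 2 := by
  intro n
  induction n using Nat.strong_induction_on with
  | _ n ih =>
    intro A hac hcard v
    by_cases hnb : ∃ w, A.Adj v w
    · obtain ⟨w, hvw⟩ := hnb
      set A' := A.deleteEdges {s(v,w)} with hA'
      have hle : A' ≤ A := SimpleGraph.deleteEdges_le _
      have hedge : A'.edgeSet = A.edgeSet \ {s(v,w)} := SimpleGraph.edgeSet_deleteEdges _
      have hmem : s(v,w) ∈ A.edgeSet := hvw
      have hfin : A.edgeSet.Finite := Set.toFinite _
      have hlt : A'.edgeSet.ncard < n := by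
        calc A'.edgeSet.ncard = (A.edgeSet \ {s(v,w)}).ncard := by rw [hedge]
          _ < A.edgeSet.ncard := Set.ncard_diff_singleton_lt_of_mem hmem hfin
          _ ≤ n := hcard
      have hac' : A'.IsAcyclic := fun u c hc =>
        hac (c.transfer A (fun e he => SimpleGraph.edgeSet_mono hle (c.edges_subset_edgeSet he)))
            (hc.transfer _)
      have hnr : ¬ A'.Reachable v w := by
        intro hr
        obtain ⟨q⟩ := hr
        have subq : ∀ e ∈ (q.toPath : A'.Walk v w).edges, e ∈ A.edgeSet := fun e he =>
          SimpleGraph.edgeSet_mono hle ((q.toPath : A'.Walk v w).edges_subset_edgeSet he)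
        let r : A.Walk v w := (q.toPath : A'.Walk v w).transfer A subq
        have hrp : r.IsPath := (q.toPath.2).transfer subq
        have hne : s(w, v) ∉ r.edges := by
          intro hme
          rw [Walk.edges_transfer] at hme
          have := (q.toPath : A'.Walk v w).edges_subset_edgeSet hme
          rw [hedge] at this
          exact this.2 (Set.mem_singleton_iff.mpr Sym2.eq_swap)
        exact hac _ (SimpleGraph.Path.cons_isCycle ⟨r, hrp⟩ hvw.symm hne)
      obtain ⟨p₁, hp₁s, hp₁c⟩ := ih _ hlt A' hac' le_rfl v
      obtain ⟨p₂, hp₂s, hp₂c⟩ := ih _ hlt A' hac' le_rfl w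
      have sub₁ : ∀ e ∈ p₁.edges, e ∈ A.edgeSet := fun e he =>
        SimpleGraph.edgeSet_mono hle (p₁.edges_subset_edgeSet he)
      have sub₂ : ∀ e ∈ p₂.edges, e ∈ A.edgeSet := fun e he =>
        SimpleGraph.edgeSet_mono hle (p₂.edges_subset_edgeSet he)
      refine ⟨Walk.cons hvw (((p₂.transfer A sub₂)).append (Walk.cons hvw.symm (p₁.transfer A sub₁))), ?_, ?_⟩
      · intro u hu
        obtain ⟨pw⟩ := hu
        have hsupp : (Walk.cons hvw (((p₂.transfer A sub₂)).append
            (Walk.cons hvw.symm (p₁.transfer A sub₁)))).support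
            = v :: ((p₂.transfer A sub₂).support ++ (p₁.transfer A sub₁).support) := by
          simp [Walk.support_append]
        rw [hsupp, List.mem_cons, List.mem_append, Walk.support_transfer, Walk.support_transfer]
        rcases reach_split v w pw (Or.inl (Reachable.refl v)) with hr | hr
        · exact Or.inr (Or.inr (hp₁s u hr))
        · exact Or.inr (Or.inl (hp₂s u hr))
      · intro e
        have hE : (Walk.cons hvw (((p₂.transfer A sub₂)).append
            (Walk.cons hvw.symm (p₁.transfer A sub₁)))).edges
            = s(v,w) :: (p₂.edges ++ (s(w,v) :: p₁.edges)) := by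
          simp [Walk.edges_append, Walk.edges_transfer]
        rw [hE]
        have hnm₁ : s(v,w) ∉ p₁.edges := fun h => by
          have := p₁.edges_subset_edgeSet h; rw [hedge] at this; exact this.2 rfl
        have hnm₂ : s(v,w) ∉ p₂.edges := fun h => by
          have := p₂.edges_subset_edgeSet h; rw [hedge] at this; exact this.2 rfl
        by_cases heq : e = s(v,w)
        · subst heq
          rw [show s(w,v) = s(v,w) from Sym2.eq_swap]
          simp [List.count_cons_self, List.count_append,
            List.count_eq_zero.mpr hnm₁, List.count_eq_zero.mpr hnm₂]
        · have heq' : e ≠ s(w,v) := by rw [show s(w,v) = s(v,w) from Sym2.eq_swap]; exact heq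
          have hdisj : ¬ (e ∈ p₁.edges ∧ e ∈ p₂.edges) := by
            induction e using Sym2.ind with
            | _ x y =>
              rintro ⟨h1, h2⟩
              have hx1 : x ∈ p₁.support := Walk.fst_mem_support_of_mem_edges _ h1
              have hx2 : x ∈ p₂.support := Walk.fst_mem_support_of_mem_edges _ h2
              have r1 : A'.Reachable v x := ⟨p₁.takeUntil x hx1⟩
              have r2 : A'.Reachable x w := ⟨(p₂.takeUntil x hx2).reverse⟩
              exact hnr (r1.trans r2)
          rw [List.count_cons_of_ne (Ne.symm heq), List.count_append, List.count_cons_of_ne (Ne.symm heq')]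
          have hb₁ := hp₁c e
          have hb₂ := hp₂c e
          rcases not_and_or.mp hdisj with hni | hni
          · rw [List.count_eq_zero.mpr hni]; omega
          · rw [List.count_eq_zero.mpr hni]; omega
    · refine ⟨Walk.nil, ?_, by simp⟩
      intro u hu
      obtain ⟨p⟩ := hu
      cases p with
      | nil => simp
      | cons h q => exact absurd ⟨_, h⟩ hnb

end TourAux


variable {V : Type}

lemma freqLE_freq (G : TemporalGraph V) {e : Sym2 V} (hT : 1 ≤ G.T)
    (he : e ∈ G.underlying.edgeSet) : G.FreqLE e (G.freq e) := by
  have hne : {f | G.FreqLE e f}.Nonempty := by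
    refine ⟨G.T, hT, ?_⟩
    intro t ht1 ht2
    have ht : t = 1 := by omega
    subst ht
    induction e using Sym2.ind with
    | _ x y =>
      obtain ⟨s, hs1, hs2⟩ := (show x ≠ y ∧ ∃ t ∈ Finset.Icc 1 G.T, G.active t s(x, y) from (SimpleGraph.mem_edgeSet G.underlying).mp he).2
      rw [Finset.mem_Icc] at hs1
      exact ⟨s, Finset.mem_Ico.mpr ⟨hs1.1, by omega⟩, hs2⟩
  exact Nat.sInf_mem hne

lemma lift_walk (G : TemporalGraph V) (hT1 : 1 ≤ G.T) :
    ∀ {a b : V} (p : G.underlying.Walk a b) (t₀ : ℕ),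
      t₀ + (p.edges.map G.freq).sum ≤ G.T →
      ∃ τ : Fin p.length → ℕ, StrictMono τ ∧ (∀ i, t₀ < τ i) ∧
        (∀ i, τ i ≤ t₀ + (p.edges.map G.freq).sum) ∧
        ∀ i : Fin p.length, G.active (τ i) s(p.getVert i, p.getVert (i + 1)) := by
  intro a b p
  induction p with
  | nil =>
    intro t₀ _
    exact ⟨fun i => i.elim0, fun i => i.elim0, fun i => i.elim0, fun i => i.elim0,
      fun i => i.elim0⟩
  | @cons a c b h q ih =>
    intro t₀ ht
    simp only [Walk.edges_cons, List.map_cons, List.sum_cons] at ht ⊢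
    have hfl : G.FreqLE s(a, c) (G.freq s(a, c)) :=
      freqLE_freq G hT1 ((SimpleGraph.mem_edgeSet G.underlying).mpr h)
    have hf1 : 1 ≤ G.freq s(a, c) := hfl.1
    obtain ⟨s, hsmem, hsact⟩ := hfl.2 (t₀ + 1) (by omega) (by omega)
    rw [Finset.mem_Ico] at hsmem
    obtain ⟨τ', h1, h2, h3, h4⟩ := ih s (by omega)
    refine ⟨Fin.cons s (fun i => τ' i), ?_, ?_, ?_, ?_⟩
    · intro i j hij
      obtain rfl | ⟨i', rfl⟩ := i.eq_zero_or_eq_succ <;>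
        obtain rfl | ⟨j', rfl⟩ := j.eq_zero_or_eq_succ
      · exact absurd hij (lt_irrefl _)
      · simpa using h2 j'
      · have hij := Fin.lt_def.mp hij; simp at hij
      · have hij := Fin.lt_def.mp hij
        simp only [Fin.val_succ, add_lt_add_iff_right] at hij
        simpa using h1 (show i' < j' from hij)
    · intro i
      obtain rfl | ⟨i', rfl⟩ := i.eq_zero_or_eq_succ
      · simpa using (by omega : t₀ < s)
      · change t₀ < τ' i'
        exact lt_trans (by omega : t₀ < s) (h2 i')
    · intro i
      obtain rfl | ⟨i', rfl⟩ := i.eq_zero_or_eq_succ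
      · change s ≤ _
        omega
      · change τ' i' ≤ _
        have := h3 i'
        omega
    · intro i
      obtain rfl | ⟨i', rfl⟩ := i.eq_zero_or_eq_succ
      · simpa [Walk.getVert_cons_succ] using hsact
      · simpa [Fin.cons_succ, Walk.getVert_cons_succ, Fin.val_succ] using h4 i'

/-- if `F` is the weight of a minimum-weight spanning tree of the
underlying graph, with each edge weighted by its frequency, and `T ≥ 2F`, then
from any starting vertex there is an exploring temporal walk of length at most
`2F`. -/
theorem explore_mst_bound {V : Type} [Fintype V] (G : TemporalGraph V) (F : ℕ)
    (h2 : 2 ≤ Fintype.card V)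
    (hconn : G.underlying.Connected)
    (hF : IsLeast {w : ℕ | ∃ T' : SimpleGraph V, T' ≤ G.underlying ∧ T'.IsTree ∧
      w = ∑ᶠ e ∈ T'.edgeSet, G.freq e} F)
    (hT : 2 * F ≤ G.T) (v : V) :
    ∃ w : G.TWalk v, w.Explores ∧ w.length ≤ 2 * F := by
  classical
  obtain ⟨⟨T', hle, htree, hFsum⟩, -⟩ := hF
  have hT1 : 1 ≤ G.T := by
    obtain ⟨u, hu⟩ := Fintype.exists_ne_of_one_lt_card (by omega) v
    obtain ⟨pw⟩ := hconn.preconnected v u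
    cases pw with
    | nil => exact absurd rfl hu
    | cons h q =>
      obtain ⟨t, ht1, -⟩ := (show _ ≠ _ ∧ ∃ t ∈ Finset.Icc 1 G.T, G.active t _ from h).2
      rw [Finset.mem_Icc] at ht1
      omega
  obtain ⟨p, hps, hpc⟩ := tour_aux (T'.edgeSet.ncard) T' htree.IsAcyclic le_rfl v
  have hall : ∀ u, u ∈ p.support := fun u => hps u (htree.isConnected.preconnected v u)
  have subE : ∀ e ∈ p.edges, e ∈ G.underlying.edgeSet := fun e he =>
    SimpleGraph.edgeSet_mono hle (p.edges_subset_edgeSet he)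
  set p' := p.transfer G.underlying subE with hp'
  have hfin : T'.edgeSet.Finite := Set.toFinite _
  have hsum : (p'.edges.map G.freq).sum ≤ 2 * F := by
    rw [hp', SimpleGraph.Walk.edges_transfer]
    rw [Finset.sum_list_map_count]
    have hFeq : F = ∑ e ∈ hfin.toFinset, G.freq e := by
      rw [hFsum]
      exact finsum_mem_eq_finite_toFinset_sum _ hfin
    calc ∑ e ∈ p.edges.toFinset, p.edges.count e • G.freq e
        ≤ ∑ e ∈ p.edges.toFinset, 2 * G.freq e :=
          Finset.sum_le_sum fun e _ => by
            have := hpc e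
            simp only [smul_eq_mul]
            exact Nat.mul_le_mul_right _ this
      _ ≤ ∑ e ∈ hfin.toFinset, 2 * G.freq e :=
          Finset.sum_le_sum_of_subset fun e he => by
            rw [Set.Finite.mem_toFinset]
            exact p.edges_subset_edgeSet (List.mem_toFinset.mp he)
      _ = 2 * F := by rw [hFeq, Finset.mul_sum]
  have hsum' : (p'.edges.map G.freq).sum ≤ G.T := le_trans hsum hT
  obtain ⟨τ, hmono, hpos, hub, hact⟩ := lift_walk G hT1 p' 0 (by simpa using hsum')
  refine ⟨⟨p'.length, fun i => p'.getVert i, τ, ?_, hmono, fun i => hpos i, ?_, ?_⟩, ?_, ?_⟩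
  · simp
  · intro i
    have h1 := hub i
    omega
  · intro i
    simpa using hact i
  · intro u
    have hu : u ∈ p'.support := by rw [hp', SimpleGraph.Walk.support_transfer]; exact hall u
    obtain ⟨n, hn, hnle⟩ := SimpleGraph.Walk.mem_support_iff_exists_getVert.mp hu
    exact ⟨⟨n, Nat.lt_succ_of_le hnle⟩, hn⟩
  · show Finset.univ.sup τ ≤ 2 * F
    refine Finset.sup_le fun i _ => ?_
    have h1 := hub i
    omega
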